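/- Let B be an associative unital k-algebra. Every finite-dimensional left B-module is semisimple if and only if every extension of finite-dimensional simple B-modules splits, i.e. for every finite-dimensional left B-module E and every submodule W ⊆ E such that both W and the quotient E/W are simple, W is a direct summand of E. -/

import Mathlib

universe u

section aux

variable {k B : Type u} [Field k] [Ring B] [Algebra k B]

/-- Key step: given the splitting hypothesis, a simple submodule `a` and a submodule `W`
maximal among those disjoint from `a` satisfy `a ⊔ W = ⊤`. -/
theorem aux_sup_eq_top
    (H : ∀ (E : Type u) [AddCommGroup E] [Module k E] [Module B E] [IsScalarTower k B E]
          [FiniteDimensional k E] (W : Submodule B E),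
        IsSimpleModule B W → IsSimpleModule B (E ⧸ W) →
        ∃ W' : Submodule B E, W ⊓ W' = ⊥ ∧ W ⊔ W' = ⊤)
    (E : Type u) [AddCommGroup E] [Module k E] [Module B E] [IsScalarTower k B E]
    [FiniteDimensional k E] (a W : Submodule B E) (ha : IsAtom a)
    (hdisj : a ⊓ W = ⊥) (hmax : ∀ X : Submodule B E, a ⊓ X = ⊥ → ¬ W < X) :
    a ⊔ W = ⊤ := by
  by_contra hne
  -- work in the quotient F := E ⧸ W
  set F := E ⧸ W
  haveI : FiniteDimensional k F :=
    Module.Finite.of_surjective (W.mkQ.restrictScalars k) (Submodule.mkQ_surjective W)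
  set S' : Submodule B F := Submodule.map W.mkQ a with hS'
  have hS'ne : S' ≠ ⊤ := by
    intro h
    exact hne (by rw [sup_comm]; exact (Submodule.map_mkQ_eq_top W a).mp h)
  -- `S'` is simple, being the isomorphic image of `a`
  haveI hasimp : IsSimpleModule B a := isSimpleModule_iff_isAtom.2 ha
  have hker : LinearMap.ker (W.mkQ ∘ₗ a.subtype) = ⊥ := by
    rw [eq_bot_iff]
    rintro ⟨x, hx⟩ hmem
    have : x ∈ W := by simpa [Submodule.Quotient.mk_eq_zero] using hmem
    have : x ∈ a ⊓ W := ⟨hx, this⟩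
    rw [hdisj] at this
    simpa using this
  have hrange : LinearMap.range (W.mkQ ∘ₗ a.subtype) = S' := by
    rw [LinearMap.range_comp, Submodule.range_subtype]
  have eS' : a ≃ₗ[B] S' :=
    (LinearEquiv.ofInjective (W.mkQ ∘ₗ a.subtype)
      (LinearMap.ker_eq_bot.mp hker)).trans (LinearEquiv.ofEq _ _ hrange)
  haveI hS'simp : IsSimpleModule B S' := IsSimpleModule.congr eS'.symm
  -- pick a simple submodule `U` of `F ⧸ S'`
  haveI : FiniteDimensional k (F ⧸ S') :=
    Module.Finite.of_surjective (S'.mkQ.restrictScalars k) (Submodule.mkQ_surjective S')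
  haveI : IsArtinian B (F ⧸ S') := isArtinian_of_tower k inferInstance
  haveI : Nontrivial (F ⧸ S') :=
    not_subsingleton_iff_nontrivial.mp
      (by rw [Submodule.Quotient.subsingleton_iff]; exact hS'ne)
  obtain ⟨U, hU⟩ : ∃ U : Submodule B (F ⧸ S'), IsAtom U := IsAtomic.exists_atom _
  set T' : Submodule B F := Submodule.comap S'.mkQ U with hT'
  have hST : S' ≤ T' := by
    intro x hx
    simp only [hT', Submodule.mem_comap]
    have : S'.mkQ x = 0 := by simpa [Submodule.Quotient.mk_eq_zero] using hx
    rw [this]; exact U.zero_mem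
  -- the module T' with submodule S₀
  haveI : FiniteDimensional k T' :=
    inferInstanceAs (FiniteDimensional k (T'.restrictScalars k))
  set S₀ : Submodule B T' := Submodule.comap T'.subtype S' with hS₀
  haveI : IsSimpleModule B S₀ :=
    IsSimpleModule.congr (Submodule.comapSubtypeEquivOfLe hST)
  -- the quotient T' ⧸ S₀ is simple, isomorphic to U
  have hkerg : LinearMap.ker (S'.mkQ ∘ₗ T'.subtype) = S₀ := by
    ext x
    simp [hS₀, Submodule.Quotient.mk_eq_zero]
  have hrangeg : LinearMap.range (S'.mkQ ∘ₗ T'.subtype) = U := by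
    rw [LinearMap.range_comp, Submodule.range_subtype, hT',
      Submodule.map_comap_eq, Submodule.range_mkQ, top_inf_eq]
  have eQ : (T' ⧸ S₀) ≃ₗ[B] U := by
    refine ((Submodule.quotEquivOfEq _ _ hkerg.symm).trans
      ((S'.mkQ ∘ₗ T'.subtype).quotKerEquivRange)).trans (LinearEquiv.ofEq _ _ hrangeg)
  haveI : IsSimpleModule B U := isSimpleModule_iff_isAtom.2 hU
  haveI : IsSimpleModule B (T' ⧸ S₀) := IsSimpleModule.congr eQ
  -- apply the hypothesis
  obtain ⟨X₀, hX₀inf, hX₀sup⟩ := H T' S₀ ‹_› ‹_›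
  set X' : Submodule B F := Submodule.map T'.subtype X₀ with hX'
  have hinf' : S' ⊓ X' = ⊥ := by
    rw [inf_comm, hX', Submodule.map_inf_eq_map_inf_comap, ← hS₀, inf_comm, hX₀inf,
      Submodule.map_bot]
  have hsup' : S' ⊔ X' = T' := by
    have : Submodule.map T'.subtype (S₀ ⊔ X₀) = Submodule.map T'.subtype ⊤ := by rw [hX₀sup]
    rw [Submodule.map_sup, Submodule.map_subtype_top, hS₀,
      Submodule.map_comap_subtype, inf_of_le_right hST] at this
    exact this
  -- pull back to E
  set X : Submodule B E := Submodule.comap W.mkQ X' with hX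
  have hWX : W ≤ X := by
    intro x hx
    simp only [hX, Submodule.mem_comap]
    have : W.mkQ x = 0 := by simpa [Submodule.Quotient.mk_eq_zero] using hx
    rw [this]; exact X'.zero_mem
  have haX : a ⊓ X = ⊥ := by
    rw [eq_bot_iff]
    rintro x ⟨hxa, hxX⟩
    have h1 : W.mkQ x ∈ S' ⊓ X' := ⟨Submodule.mem_map_of_mem hxa, hxX⟩
    rw [hinf'] at h1
    have hxW : x ∈ W := by simpa [Submodule.Quotient.mk_eq_zero] using h1
    have : x ∈ a ⊓ W := ⟨hxa, hxW⟩
    rw [hdisj] at this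
    exact this
  have hWneX : W ≠ X := by
    intro h
    have hX'bot : X' = ⊥ := by
      have := congrArg (Submodule.map W.mkQ) h
      rw [hX, Submodule.map_comap_eq, Submodule.range_mkQ, top_inf_eq] at this
      rw [← this]
      rw [eq_bot_iff]
      rintro y ⟨x, hx, rfl⟩
      simp only [Submodule.mem_bot, Submodule.mkQ_apply]
      exact (Submodule.Quotient.mk_eq_zero W).mpr hx
    have hS₀top : S₀ = ⊤ := by
      have : Submodule.map T'.subtype S₀ = Submodule.map T'.subtype ⊤ := by
        rw [Submodule.map_subtype_top, hS₀, Submodule.map_comap_subtype,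
          inf_of_le_right hST, ← hsup', hX'bot, sup_bot_eq]
      exact Submodule.map_injective_of_injective (Submodule.injective_subtype T') this
    haveI := IsSimpleModule.nontrivial B (T' ⧸ S₀)
    rw [← Submodule.Quotient.subsingleton_iff] at hS₀top
    exact (not_subsingleton_iff_nontrivial.mpr ‹_›) hS₀top
  exact hmax X haX (lt_of_le_of_ne hWX hWneX)

end aux

/-- every finite-dimensional left `B`-module is semisimple if and only if every
extension of finite-dimensional simple `B`-modules splits: for every finite-dimensional left
`B`-module `E` and submodule `W ⊆ E` with `W` and `E ⧸ W` simple, `W` is a direct summand. -/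
theorem semisimple_iff_ext_simples_split (k B : Type u) [Field k] [Ring B] [Algebra k B] :
    (∀ (V : Type u) [AddCommGroup V] [Module k V] [Module B V] [IsScalarTower k B V]
        [FiniteDimensional k V], IsSemisimpleModule B V) ↔
      (∀ (E : Type u) [AddCommGroup E] [Module k E] [Module B E] [IsScalarTower k B E]
          [FiniteDimensional k E] (W : Submodule B E),
        IsSimpleModule B W → IsSimpleModule B (E ⧸ W) →
        ∃ W' : Submodule B E, W ⊓ W' = ⊥ ∧ W ⊔ W' = ⊤) := by
  constructor
  · intro h E _ _ _ _ _ W _ _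
    haveI := h E
    obtain ⟨W', hW'⟩ := exists_isCompl W
    exact ⟨W', disjoint_iff.mp hW'.disjoint, codisjoint_iff.mp hW'.codisjoint⟩
  · intro H
    suffices key : ∀ n : ℕ, ∀ (V : Type u) [AddCommGroup V] [Module k V] [Module B V]
        [IsScalarTower k B V] [FiniteDimensional k V],
        Module.finrank k V = n → IsSemisimpleModule B V by
      intro V _ _ _ _ _
      exact key (Module.finrank k V) V rfl
    intro n
    induction n using Nat.strong_induction_on with
    | _ n IH =>
      intro V _ _ _ _ _ hn
      by_cases htriv : Subsingleton V
      · haveI := htriv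
        exact (isSemisimpleModule_iff B V).mpr Subsingleton.instComplementedLattice
      · haveI : Nontrivial V := not_subsingleton_iff_nontrivial.mp htriv
        haveI : IsArtinian B V := isArtinian_of_tower k inferInstance
        haveI : IsNoetherian B V := isNoetherian_of_tower k inferInstance
        obtain ⟨a, ha⟩ : ∃ a : Submodule B V, IsAtom a := IsAtomic.exists_atom _
        -- choose a maximal submodule disjoint from a
        obtain ⟨W, hW0, hWmax⟩ := set_has_maximal_iff_noetherian.mpr ‹IsNoetherian B V›
          {X : Submodule B V | a ⊓ X = ⊥} ⟨⊥, by simp⟩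
        have hW : a ⊓ W = ⊥ := hW0
        have hsup : a ⊔ W = ⊤ := aux_sup_eq_top H V a W ha hW (fun X hX => hWmax X hX)
        -- W is proper, hence of smaller dimension
        have hWne : W ≠ ⊤ := by
          intro h
          rw [h, inf_top_eq] at hW
          exact ha.1 hW
        have hlt : Module.finrank k W < n := by
          rw [← hn]
          have h1 : Module.finrank k (W.restrictScalars k) = Module.finrank k W :=
            ((Submodule.restrictScalarsEquiv k B V W).restrictScalars k).finrank_eq
          rw [← h1]
          refine Submodule.finrank_lt (K := k) (V := V) ?_
          intro h
          refine hWne (Submodule.restrictScalars_injective k B V ?_)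
          rw [h, Submodule.restrictScalars_top]
        haveI : FiniteDimensional k W :=
          inferInstanceAs (FiniteDimensional k (W.restrictScalars k))
        haveI hWss : IsSemisimpleModule B W := IH _ hlt W rfl
        haveI : IsSimpleModule B a := isSimpleModule_iff_isAtom.2 ha
        haveI hass : IsSemisimpleModule B a := inferInstance
        refine isSemisimpleModule_of_isSemisimpleModule_submodule'
          (p := fun b : Bool => if b then a else W) (fun b => ?_) ?_
        · cases b <;> simpa
        · rw [iSup_bool_eq]
          simpa using hsup
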